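/- Let n, p be positive integers, let x ∈ ℝⁿ, let y¹, …, yᵖ ∈ ℝⁿ, and let f : ℝⁿ → ℝ be the quadratic function f(y) = a + bᵀ(y − x) + ½ (y − x)ᵀ C (y − x), where a ∈ ℝ, b ∈ ℝⁿ, and C is a symmetric invertible n×n real matrix. Set zˡ = C (yˡ − x) for ℓ = 1, …, p. Let dᵖʳᵉᵛ ∈ ℝⁿ, and suppose d* ∈ ℝⁿ satisfies the Newton-direction interpolating conditions (zˡ)ᵀ d* = −f(yˡ) + f(x) + ½ (yˡ − x)ᵀ zˡ for ℓ = 1, …, p, and minimizes ‖d − dᵖʳᵉᵛ‖ among all d ∈ ℝⁿ satisfying those conditions. Then ‖d* − (−C⁻¹ b)‖² = ‖dᵖʳᵉᵛ − (−C⁻¹ b)‖² − ‖d* − dᵖʳᵉᵛ‖². -/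

import Mathlib

open scoped Matrix

noncomputable def eNorm {n : ℕ} (u : Fin n → ℝ) : ℝ :=
  Real.sqrt (∑ i, u i ^ 2)

lemma eNorm_sq {n : ℕ} (u : Fin n → ℝ) : eNorm u ^ 2 = u ⬝ᵥ u := by
  unfold eNorm
  rw [Real.sq_sqrt (Finset.sum_nonneg fun i _ => sq_nonneg _)]
  simp [dotProduct, pow_two]

theorem newton_direction_recovery_pythagoras
    {n p : ℕ} (hn : 0 < n) (hp : 0 < p)
    (x : Fin n → ℝ) (y : Fin p → Fin n → ℝ)
    (a : ℝ) (b : Fin n → ℝ)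
    (C : Matrix (Fin n) (Fin n) ℝ) (hC : C.IsSymm) (hCinv : IsUnit C)
    (f : (Fin n → ℝ) → ℝ)
    (hf : ∀ u, f u = a + b ⬝ᵥ (u - x) + (1 / 2) * ((u - x) ⬝ᵥ C.mulVec (u - x)))
    (z : Fin p → Fin n → ℝ) (hz : ∀ ℓ, z ℓ = C.mulVec (y ℓ - x))
    (dprev dstar : Fin n → ℝ)
    (hfeas : ∀ ℓ : Fin p,
      z ℓ ⬝ᵥ dstar = -f (y ℓ) + f x + (1 / 2) * ((y ℓ - x) ⬝ᵥ z ℓ))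
    (hmin : ∀ d : Fin n → ℝ,
      (∀ ℓ : Fin p, z ℓ ⬝ᵥ d = -f (y ℓ) + f x + (1 / 2) * ((y ℓ - x) ⬝ᵥ z ℓ)) →
      eNorm (dstar - dprev) ≤ eNorm (d - dprev)) :
    eNorm (dstar - -C⁻¹.mulVec b) ^ 2 = eNorm (dprev - -C⁻¹.mulVec b) ^ 2 - eNorm (dstar - dprev) ^ 2 := by
  set dN : Fin n → ℝ := -C⁻¹.mulVec b with hdN
  have hdet : IsUnit C.det := (Matrix.isUnit_iff_isUnit_det C).mp hCinv
  have hCC : C.mulVec (C⁻¹.mulVec b) = b := by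
    rw [Matrix.mulVec_mulVec, Matrix.mul_nonsing_inv _ hdet, Matrix.one_mulVec]
  have hsym : ∀ v w : Fin n → ℝ, (C.mulVec v) ⬝ᵥ w = v ⬝ᵥ (C.mulVec w) := by
    intro v w
    rw [Matrix.dotProduct_mulVec, ← Matrix.mulVec_transpose, hC.eq, dotProduct_comm]
  have hfx : f x = a := by rw [hf x]; simp
  have hrhs : ∀ ℓ, -f (y ℓ) + f x + (1 / 2) * ((y ℓ - x) ⬝ᵥ z ℓ)
      = -(b ⬝ᵥ (y ℓ - x)) := by
    intro ℓ
    rw [hf (y ℓ), hfx, hz ℓ]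
    ring
  have hfeasN : ∀ ℓ : Fin p, z ℓ ⬝ᵥ dN = -f (y ℓ) + f x + (1 / 2) * ((y ℓ - x) ⬝ᵥ z ℓ) := by
    intro ℓ
    rw [hrhs ℓ, hz ℓ, hdN, dotProduct_neg, hsym, hCC, dotProduct_comm]
  -- feasibility of the whole line
  set w : Fin n → ℝ := dN - dstar with hw
  have hline : ∀ t : ℝ, ∀ ℓ : Fin p, z ℓ ⬝ᵥ (dstar + t • w)
      = -f (y ℓ) + f x + (1 / 2) * ((y ℓ - x) ⬝ᵥ z ℓ) := by
    intro t ℓ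
    rw [dotProduct_add, dotProduct_smul, hw, dotProduct_sub,
      hfeasN ℓ, hfeas ℓ]
    simp
  set u : Fin n → ℝ := dstar - dprev with hu
  have hQ : ∀ t : ℝ, u ⬝ᵥ u ≤ (u + t • w) ⬝ᵥ (u + t • w) := by
    intro t
    have h1 := hmin (dstar + t • w) (hline t)
    have h2 : eNorm (dstar - dprev) ^ 2 ≤ eNorm (dstar + t • w - dprev) ^ 2 := by
      have := Real.sqrt_nonneg (∑ i, ((dstar - dprev) i) ^ 2)
      exact pow_le_pow_left₀ (by exact Real.sqrt_nonneg _) h1 2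
    rw [eNorm_sq, eNorm_sq] at h2
    have : dstar + t • w - dprev = u + t • w := by rw [hu]; abel
    rwa [this] at h2
  have hc : u ⬝ᵥ w = 0 := by
    set c : ℝ := u ⬝ᵥ w with hcdef
    set q : ℝ := w ⬝ᵥ w with hqdef
    have hq0 : 0 ≤ q := by
      rw [hqdef]; simp only [dotProduct]
      exact Finset.sum_nonneg fun i _ => mul_self_nonneg _
    have key : ∀ t : ℝ, 0 ≤ 2 * t * c + t ^ 2 * q := by
      intro t
      have := hQ t
      have hexp : (u + t • w) ⬝ᵥ (u + t • w) = u ⬝ᵥ u + 2 * t * c + t ^ 2 * q := by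
        rw [hcdef, hqdef]
        simp only [add_dotProduct, dotProduct_add, smul_dotProduct,
          dotProduct_smul, smul_eq_mul, dotProduct_comm w u]
        ring
      rw [hexp] at this
      linarith
    have hq1 : (0:ℝ) < q + 1 := by linarith
    set s : ℝ := -c / (q + 1) with hs
    have hsc : s * (q + 1) = -c := by rw [hs]; exact div_mul_cancel₀ _ hq1.ne'
    have hkey := key s
    have hc2 : c = -(s * (q + 1)) := by linarith
    rw [hc2] at hkey
    have hs2 : s ^ 2 * (q + 2) ≤ 0 := by nlinarith [hkey]
    have hs0 : s = 0 := by nlinarith [sq_nonneg s]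
    rw [hs0] at hsc
    rw [hcdef] at hsc
    linarith
  -- Pythagoras
  rw [eNorm_sq, eNorm_sq, eNorm_sq]
  have e1 : dprev - dN = -u + -w := by rw [hu, hw]; abel
  have e2 : dstar - dN = -w := by rw [hw]; abel
  rw [e1, e2]
  simp only [add_dotProduct, dotProduct_add, neg_dotProduct,
    dotProduct_neg, neg_neg, dotProduct_comm w u, hc]
  ring
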